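/- The mechanism Hist_med is ε-differentially private: for every pair of neighboring databases D ≈ D' (finite multisets of real numbers differing by insertion or deletion of a single element) and every output o ∈ {0, 1}, Pr[Hist_med(D) = o] ≤ e^{ε} · Pr[Hist_med(D') = o]. -/

import Mathlib

open MeasureTheory Real
open scoped Classical
open scoped ENNReal

/-- `Lap b` : the Laplace distribution on `ℝ` with density
`x ↦ (1/(2b)) * exp (-|x|/b)` with respect to Lebesgue measure. -/
noncomputable def laplace (b : ℝ) : Measure ℝ :=
  volume.withDensity (fun x => ENNReal.ofReal ((1 / (2 * b)) * Real.exp (-|x| / b)))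

/-- The output of `Hist_med` on database `D` (a finite multiset of reals) with noise
`ω = (ρ, ν₁, ν₂)`: with `ñ = |D| + ρ`, `c₁ = #{v ∈ D : v ≤ a} + ν₁` and
`c₂ = #{v ∈ D : v ≥ b} + ν₂`, output `0` (`false`, "distance bound unmet") if
`c₁ ≥ ⌈ñ/2⌉` or `c₂ ≥ ⌈ñ/2⌉`, and `1` (`true`) otherwise. -/
noncomputable def histMedOut (a b : ℝ) (D : Multiset ℝ) (ω : ℝ × ℝ × ℝ) : Bool :=
  let n : ℝ := (Multiset.card D : ℝ) + ω.1
  let c₁ : ℝ := ((Multiset.card (D.filter (fun v => v ≤ a)) : ℕ) : ℝ) + ω.2.1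
  let c₂ : ℝ := ((Multiset.card (D.filter (fun v => b ≤ v)) : ℕ) : ℝ) + ω.2.2
  if ((⌈n / 2⌉ : ℤ) : ℝ) ≤ c₁ ∨ ((⌈n / 2⌉ : ℤ) : ℝ) ≤ c₂ then false else true

/-- The joint distribution of the three independent `Lap(2/ε)` noise samples
`(ρ, ν₁, ν₂)` used by `Hist_med`. -/
noncomputable def histMedNoise (ε : ℝ) : Measure (ℝ × ℝ × ℝ) :=
  (laplace (2 / ε)).prod ((laplace (2 / ε)).prod (laplace (2 / ε)))

/-- The Laplace density. -/
noncomputable def lapDen (b : ℝ) : ℝ → ℝ≥0∞ :=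
  fun x => ENNReal.ofReal ((1 / (2 * b)) * Real.exp (-|x| / b))

lemma lapDen_meas (b : ℝ) : Measurable (lapDen b) := by
  apply ENNReal.measurable_ofReal.comp
  fun_prop

lemma laplace_sigmaFinite (b : ℝ) : SigmaFinite (laplace b) :=
  SigmaFinite.withDensity_of_ne_top' (fun _ => ENNReal.ofReal_ne_top)

/-- density ratio bound under shift -/
lemma lapDen_shift_le (b t x : ℝ) (hb : 0 < b) :
    lapDen b (x + t) ≤ ENNReal.ofReal (Real.exp (|t| / b)) * lapDen b x := by
  unfold lapDen
  rw [← ENNReal.ofReal_mul (by positivity)]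
  apply ENNReal.ofReal_le_ofReal
  have h1 : (0:ℝ) ≤ 1 / (2 * b) := by positivity
  have h2 : Real.exp (-|x + t| / b) ≤ Real.exp (|t| / b) * Real.exp (-|x| / b) := by
    rw [← Real.exp_add]
    apply Real.exp_le_exp.mpr
    have habs : |x| ≤ |x + t| + |t| := by
      have := abs_add_le (x + t) (-t)
      simpa using this
    rw [← add_div, div_le_div_iff_of_pos_right hb] at *
    linarith
  calc 1 / (2 * b) * Real.exp (-|x + t| / b)
      ≤ 1 / (2 * b) * (Real.exp (|t| / b) * Real.exp (-|x| / b)) := by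
        apply mul_le_mul_of_nonneg_left h2 h1
    _ = Real.exp (|t| / b) * (1 / (2 * b) * Real.exp (-|x| / b)) := by ring

/-- The joint density of the noise. -/
noncomputable def noiseDen (b : ℝ) : ℝ × ℝ × ℝ → ℝ≥0∞ :=
  fun ω => lapDen b ω.1 * (lapDen b ω.2.1 * lapDen b ω.2.2)

lemma noiseDen_meas (b : ℝ) : Measurable (noiseDen b) := by
  refine Measurable.mul (f := fun ω : ℝ × ℝ × ℝ => lapDen b ω.1)
    (g := fun ω : ℝ × ℝ × ℝ => lapDen b ω.2.1 * lapDen b ω.2.2) ?_ ?_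
  · exact (lapDen_meas b).comp measurable_fst
  · exact ((lapDen_meas b).comp (measurable_fst.comp measurable_snd)).mul
      ((lapDen_meas b).comp (measurable_snd.comp measurable_snd))

/-- product of withDensity = withDensity of product density -/
lemma prod_withDensity {α β : Type*} [MeasurableSpace α] [MeasurableSpace β]
    (μ : Measure α) (ν : Measure β) [SigmaFinite μ] [SigmaFinite ν]
    (f : α → ℝ≥0∞) (g : β → ℝ≥0∞) (hf : Measurable f) (hg : Measurable g)
    (hf' : ∀ x, f x ≠ ⊤) (hg' : ∀ y, g y ≠ ⊤) :
    (μ.withDensity f).prod (ν.withDensity g)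
      = (μ.prod ν).withDensity (fun p => f p.1 * g p.2) := by
  haveI h1 : SigmaFinite (ν.withDensity g) := SigmaFinite.withDensity_of_ne_top' hg'
  haveI h2 : SigmaFinite (μ.withDensity f) := SigmaFinite.withDensity_of_ne_top' hf'
  refine Measure.prod_eq (μ := μ.withDensity f) (ν := ν.withDensity g)
    fun s t hs ht => ?_
  rw [withDensity_apply _ (hs.prod ht), withDensity_apply _ hs, withDensity_apply _ ht,
    ← Measure.prod_restrict, lintegral_prod_mul hf.aemeasurable hg.aemeasurable]

lemma noiseDen_shift_le (b : ℝ) (hb : 0 < b) (t x : ℝ × ℝ × ℝ) :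
    noiseDen b (x + t) ≤
      ENNReal.ofReal (Real.exp ((|t.1| + |t.2.1| + |t.2.2|) / b)) * noiseDen b x := by
  have key : noiseDen b (x + t)
      = lapDen b (x.1 + t.1) * (lapDen b (x.2.1 + t.2.1) * lapDen b (x.2.2 + t.2.2)) := rfl
  rw [key]
  calc lapDen b (x.1 + t.1) * (lapDen b (x.2.1 + t.2.1) * lapDen b (x.2.2 + t.2.2))
      ≤ (ENNReal.ofReal (Real.exp (|t.1| / b)) * lapDen b x.1) *
        ((ENNReal.ofReal (Real.exp (|t.2.1| / b)) * lapDen b x.2.1) *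
         (ENNReal.ofReal (Real.exp (|t.2.2| / b)) * lapDen b x.2.2)) :=
        mul_le_mul' (lapDen_shift_le b t.1 x.1 hb)
          (mul_le_mul' (lapDen_shift_le b t.2.1 x.2.1 hb) (lapDen_shift_le b t.2.2 x.2.2 hb))
    _ = (ENNReal.ofReal (Real.exp (|t.1| / b)) * ENNReal.ofReal (Real.exp (|t.2.1| / b)) *
          ENNReal.ofReal (Real.exp (|t.2.2| / b))) * noiseDen b x := by
        unfold noiseDen; ring
    _ = ENNReal.ofReal (Real.exp ((|t.1| + |t.2.1| + |t.2.2|) / b)) * noiseDen b x := by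
        rw [← ENNReal.ofReal_mul (le_of_lt (Real.exp_pos _)),
            ← ENNReal.ofReal_mul (by positivity), ← Real.exp_add, ← Real.exp_add]
        congr 2
        rw [← add_div, ← add_div]

lemma histMedNoise_eq (ε : ℝ) :
    histMedNoise ε = ((volume : Measure ℝ).prod
      ((volume : Measure ℝ).prod (volume : Measure ℝ))).withDensity (noiseDen (2/ε)) := by
  have h1 : (laplace (2/ε)).prod (laplace (2/ε))
      = ((volume : Measure ℝ).prod (volume : Measure ℝ)).withDensity
          (fun p => lapDen (2/ε) p.1 * lapDen (2/ε) p.2) :=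
    prod_withDensity _ _ _ _ (lapDen_meas _) (lapDen_meas _)
      (fun _ => ENNReal.ofReal_ne_top) (fun _ => ENNReal.ofReal_ne_top)
  have h2 : histMedNoise ε = (laplace (2/ε)).prod ((laplace (2/ε)).prod (laplace (2/ε))) := rfl
  rw [h2, h1]
  have h3 := prod_withDensity (volume : Measure ℝ)
      ((volume : Measure ℝ).prod (volume : Measure ℝ))
      (lapDen (2/ε)) (fun p => lapDen (2/ε) p.1 * lapDen (2/ε) p.2)
      (lapDen_meas _)
      (((lapDen_meas _).comp measurable_fst).mul ((lapDen_meas _).comp measurable_snd))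
      (fun _ => ENNReal.ofReal_ne_top)
      (fun _ => ENNReal.mul_ne_top ENNReal.ofReal_ne_top ENNReal.ofReal_ne_top)
  have h4 : laplace (2/ε) = volume.withDensity (lapDen (2/ε)) := rfl
  rw [h4, h3]
  rfl

lemma histMedOut_measurableSet (a b : ℝ) (D : Multiset ℝ) (o : Bool) :
    MeasurableSet {ω : ℝ × ℝ × ℝ | histMedOut a b D ω = o} := by
  have hceil : Measurable fun ω : ℝ × ℝ × ℝ =>
      ((⌈((Multiset.card D : ℝ) + ω.1) / 2⌉ : ℤ) : ℝ) := by
    apply measurable_from_top.comp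
    exact Int.measurable_ceil.comp (by fun_prop)
  have hc₁ : Measurable fun ω : ℝ × ℝ × ℝ =>
      ((Multiset.card (D.filter (fun v => v ≤ a)) : ℕ) : ℝ) + ω.2.1 := by fun_prop
  have hc₂ : Measurable fun ω : ℝ × ℝ × ℝ =>
      ((Multiset.card (D.filter (fun v => b ≤ v)) : ℕ) : ℝ) + ω.2.2 := by fun_prop
  have hcond : MeasurableSet {ω : ℝ × ℝ × ℝ |
      ((⌈((Multiset.card D : ℝ) + ω.1) / 2⌉ : ℤ) : ℝ) ≤
        ((Multiset.card (D.filter (fun v => v ≤ a)) : ℕ) : ℝ) + ω.2.1 ∨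
      ((⌈((Multiset.card D : ℝ) + ω.1) / 2⌉ : ℤ) : ℝ) ≤
        ((Multiset.card (D.filter (fun v => b ≤ v)) : ℕ) : ℝ) + ω.2.2} :=
    (measurableSet_le hceil hc₁).union (measurableSet_le hceil hc₂)
  have hmeas : Measurable (histMedOut a b D) := by
    unfold histMedOut
    exact Measurable.ite hcond measurable_const measurable_const
  exact hmeas (MeasurableSet.singleton o)

lemma histMedOut_cons (a b : ℝ) (v : ℝ) (E : Multiset ℝ) (ω : ℝ × ℝ × ℝ) :
    histMedOut a b (v ::ₘ E) ω = histMedOut a b E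
      (ω.1 + 1, ω.2.1 + (if v ≤ a then (1:ℝ) else 0), ω.2.2 + (if b ≤ v then (1:ℝ) else 0)) := by
  unfold histMedOut
  have hn : (Multiset.card (v ::ₘ E) : ℝ) + ω.1 = (Multiset.card E : ℝ) + (ω.1 + 1) := by
    rw [Multiset.card_cons]; push_cast; ring
  have hc₁ : ((Multiset.card ((v ::ₘ E).filter (fun x => x ≤ a)) : ℕ) : ℝ) + ω.2.1
      = ((Multiset.card (E.filter (fun x => x ≤ a)) : ℕ) : ℝ)
        + (ω.2.1 + (if v ≤ a then (1:ℝ) else 0)) := by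
    rw [Multiset.filter_cons]
    split_ifs with h
    · rw [Multiset.card_add]; push_cast; simp; ring
    · simp
  have hc₂ : ((Multiset.card ((v ::ₘ E).filter (fun x => b ≤ x)) : ℕ) : ℝ) + ω.2.2
      = ((Multiset.card (E.filter (fun x => b ≤ x)) : ℕ) : ℝ)
        + (ω.2.2 + (if b ≤ v then (1:ℝ) else 0)) := by
    rw [Multiset.filter_cons]
    split_ifs with h
    · rw [Multiset.card_add]; push_cast; simp; ring
    · simp
  simp only [hn, hc₁, hc₂]

/-- Generic shift lemma for withDensity over a right-invariant measure. -/
lemma withDensity_shift_le {α : Type*} [MeasurableSpace α] [AddGroup α] [MeasurableAdd α]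
    (μ : Measure α) [μ.IsAddRightInvariant] (F : α → ℝ≥0∞) (hF : Measurable F)
    (t : α) (c : ℝ≥0∞) (hFc : ∀ x, F (x + t) ≤ c * F x)
    (S : Set α) (hS : MeasurableSet S) :
    μ.withDensity F S ≤ c * μ.withDensity F ((fun x => x + t) ⁻¹' S) := by
  have hTm : Measurable (fun x : α => x + t) := measurable_add_const t
  rw [withDensity_apply _ hS, withDensity_apply _ (hTm hS)]
  calc ∫⁻ x in S, F x ∂μ = ∫⁻ x, S.indicator F x ∂μ := (lintegral_indicator hS F).symm
    _ = ∫⁻ x, S.indicator F (x + t) ∂μ := (lintegral_add_right_eq_self _ t).symm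
    _ ≤ ∫⁻ x, c * ((fun x => x + t) ⁻¹' S).indicator F x ∂μ := by
        apply lintegral_mono; intro x
        simp only []
        by_cases hx : x + t ∈ S
        · have hx' : x ∈ (fun x => x + t) ⁻¹' S := hx
          rw [Set.indicator_of_mem hx, Set.indicator_of_mem hx']
          exact hFc x
        · have hx' : x ∉ (fun x => x + t) ⁻¹' S := hx
          rw [Set.indicator_of_notMem hx, Set.indicator_of_notMem hx']
          simp
    _ = c * ∫⁻ x in (fun x => x + t) ⁻¹' S, F x ∂μ := by
        rw [lintegral_const_mul c (hF.indicator (hTm hS)), lintegral_indicator (hTm hS)]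

/-- `Hist_med` is `ε`-differentially private: for every pair of neighboring databases
`D ≈ D'` (finite multisets of reals differing by insertion or deletion of one
element) and every output `o ∈ {0, 1}`,
`Pr[Hist_med(D) = o] ≤ e^ε · Pr[Hist_med(D') = o]`. -/
theorem histmed_is_DP (ε a b : ℝ) (hε : 0 < ε) (hab : a < b)
    (D D' : Multiset ℝ)
    (hnb : ∃ v : ℝ, D' = v ::ₘ D ∨ D = v ::ₘ D') :
    ∀ o : Bool,
      histMedNoise ε {ω | histMedOut a b D ω = o} ≤
        ENNReal.ofReal (Real.exp ε) * histMedNoise ε {ω | histMedOut a b D' ω = o} := by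
  intro o
  have hβ : (0:ℝ) < 2 / ε := by positivity
  obtain ⟨v, hv⟩ := hnb
  set δ₁ : ℝ := if v ≤ a then (1:ℝ) else 0 with hδ₁
  set δ₂ : ℝ := if b ≤ v then (1:ℝ) else 0 with hδ₂
  have hδ : ∀ E : Multiset ℝ, ∀ ω : ℝ × ℝ × ℝ, histMedOut a b (v ::ₘ E) ω
      = histMedOut a b E (ω + ((1:ℝ), δ₁, δ₂)) := by
    intro E ω
    exact histMedOut_cons a b v E ω
  have hδsum : |δ₁| + |δ₂| ≤ 1 := by
    rw [hδ₁, hδ₂]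
    split_ifs with h1 h2
    · exact absurd hab (not_lt.mpr (h2.trans h1))
    · simp
    · simp
    · simp
  obtain ⟨t, hts, htsum⟩ : ∃ t : ℝ × ℝ × ℝ,
      {ω : ℝ × ℝ × ℝ | histMedOut a b D' ω = o} =
        (fun ω => ω + t) ⁻¹' {ω | histMedOut a b D ω = o} ∧
      |t.1| + |t.2.1| + |t.2.2| ≤ 2 := by
    rcases hv with hv | hv
    · refine ⟨((1:ℝ), δ₁, δ₂), ?_, ?_⟩
      · ext ω
        simp only [Set.mem_setOf_eq, Set.mem_preimage]
        rw [hv, hδ D ω]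
      · simp only [abs_one]
        linarith
    · refine ⟨-((1:ℝ), δ₁, δ₂), ?_, ?_⟩
      · ext ω
        simp only [Set.mem_setOf_eq, Set.mem_preimage]
        have key : histMedOut a b D (ω + -((1:ℝ), δ₁, δ₂)) = histMedOut a b D' ω := by
          rw [hv, hδ D' (ω + -((1:ℝ), δ₁, δ₂)), neg_add_cancel_right]
        rw [key]
      · simp only [Prod.fst_neg, Prod.snd_neg, abs_neg, abs_one]
        linarith
  set Λ : Measure (ℝ × ℝ × ℝ) :=
    (volume : Measure ℝ).prod ((volume : Measure ℝ).prod (volume : Measure ℝ)) with hΛ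
  haveI : Λ.IsAddRightInvariant := Measure.prod.instIsAddRightInvariant
  have hshift := withDensity_shift_le Λ (noiseDen (2/ε)) (noiseDen_meas (2/ε))
      t (ENNReal.ofReal (Real.exp ((|t.1| + |t.2.1| + |t.2.2|) / (2/ε))))
      (fun x => noiseDen_shift_le (2/ε) hβ t x)
      {ω | histMedOut a b D ω = o} (histMedOut_measurableSet a b D o)
  calc histMedNoise ε {ω | histMedOut a b D ω = o}
      = Λ.withDensity (noiseDen (2/ε)) {ω | histMedOut a b D ω = o} := by
        rw [histMedNoise_eq]
    _ ≤ ENNReal.ofReal (Real.exp ((|t.1| + |t.2.1| + |t.2.2|) / (2/ε))) *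
          Λ.withDensity (noiseDen (2/ε)) ((fun ω => ω + t) ⁻¹' {ω | histMedOut a b D ω = o}) :=
        hshift
    _ = ENNReal.ofReal (Real.exp ((|t.1| + |t.2.1| + |t.2.2|) / (2/ε))) *
          histMedNoise ε {ω | histMedOut a b D' ω = o} := by
        rw [hts, histMedNoise_eq]
    _ ≤ ENNReal.ofReal (Real.exp ε) * histMedNoise ε {ω | histMedOut a b D' ω = o} := by
        apply mul_le_mul_left
        apply ENNReal.ofReal_le_ofReal
        apply Real.exp_le_exp.mpr
        rw [div_div_eq_mul_div]
        rw [div_le_iff₀ (by norm_num : (0:ℝ) < 2)]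
        nlinarith
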